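/- Every 1-track is invertible: for every 1-path γ in M, letting γ̄ denote the reversed 1-path γ̄(t) = γ(1−t) and c_x the constant 1-path at x ∈ M, the composition γ∘γ̄ is rank-1 homotopic to c_{γ(0)}, and γ̄∘γ is rank-1 homotopic to c_{γ(1)}. -/

import Mathlib

open scoped Manifold

variable (E : Type*) [NormedAddCommGroup E] [NormedSpace ℝ E] [FiniteDimensional ℝ E]
variable {M : Type*} [TopologicalSpace M] [ChartedSpace E M]
  [IsManifold 𝓘(ℝ, E) (⊤ : ℕ∞) M]

/-- A 1-path in `M`: a smooth map `ℝ → M` that is constant near `(-∞, 0]` and near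
`[1, ∞)` (in the sense of the `ε`-conditions). -/
def IsOnePath (γ : ℝ → M) : Prop :=
  ContMDiff 𝓘(ℝ, ℝ) 𝓘(ℝ, E) (⊤ : ℕ∞) γ ∧
    ∃ ε > (0 : ℝ), (∀ t ≤ ε, γ t = γ 0) ∧ (∀ t, 1 - ε ≤ t → γ t = γ 1)

/-- A 2-path in `M`, as a smooth map `ℝ × ℝ → M` with coordinates `(s, t)`,
constant near the boundary in each variable, whose images at `t = 0` and `t = 1`
are single points. -/
def IsTwoPath (g : ℝ × ℝ → M) : Prop :=
  ContMDiff 𝓘(ℝ, ℝ × ℝ) 𝓘(ℝ, E) (⊤ : ℕ∞) g ∧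
    (∃ ε > (0 : ℝ),
      (∀ s t, s ≤ ε → g (s, t) = g (0, t)) ∧
      (∀ s t, 1 - ε ≤ s → g (s, t) = g (1, t)) ∧
      (∀ s t, t ≤ ε → g (s, t) = g (s, 0)) ∧
      (∀ s t, 1 - ε ≤ t → g (s, t) = g (s, 1))) ∧
    (∀ s s', g (s, 0) = g (s', 0)) ∧ (∀ s s', g (s, 1) = g (s', 1))

/-- A rank-1 homotopy: a 2-path whose differential has rank at most 1 at every point. -/
def IsRank1Homotopy (h : ℝ × ℝ → M) : Prop :=
  IsTwoPath E h ∧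
    ∀ p : ℝ × ℝ,
      Module.finrank ℝ
        (LinearMap.range (mfderiv 𝓘(ℝ, ℝ × ℝ) 𝓘(ℝ, E) h p).toLinearMap) ≤ 1

/-- Two 1-paths are rank-1 homotopic if they are joined by a rank-1 homotopy. -/
def Rank1Homotopic (γ γ' : ℝ → M) : Prop :=
  ∃ h : ℝ × ℝ → M, IsRank1Homotopy E h ∧ (∀ t, h (0, t) = γ t) ∧ (∀ t, h (1, t) = γ' t)

/-- Composition of 1-paths. -/
noncomputable def compPath (γ₁ γ₂ : ℝ → M) : ℝ → M := fun t =>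
  if t ≤ 1 / 2 then γ₁ (2 * t) else γ₂ (2 * t - 1)

/-- Any map factoring through `ℝ` has differential of rank at most one. -/
lemma rank_le_one_of_factor {γ : ℝ → M} (hγ : ContMDiff 𝓘(ℝ, ℝ) 𝓘(ℝ, E) (⊤ : ℕ∞) γ)
    {ρ : ℝ × ℝ → ℝ} (hρ : ContDiff ℝ (⊤ : ℕ∞) ρ) (p : ℝ × ℝ) :
    Module.finrank ℝ
      (LinearMap.range (mfderiv 𝓘(ℝ, ℝ × ℝ) 𝓘(ℝ, E) (fun q => γ (ρ q)) p).toLinearMap) ≤ 1 := by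
  haveI : Module.Finite ℝ (TangentSpace 𝓘(ℝ, ℝ) (ρ p)) := inferInstanceAs (Module.Finite ℝ ℝ)
  haveI : Module.Finite ℝ (TangentSpace 𝓘(ℝ, E) (γ (ρ p))) := inferInstanceAs (Module.Finite ℝ E)
  have hγd : MDifferentiableAt 𝓘(ℝ, ℝ) 𝓘(ℝ, E) γ (ρ p) := hγ.mdifferentiableAt (by simp)
  have hρd : MDifferentiableAt 𝓘(ℝ, ℝ × ℝ) 𝓘(ℝ, ℝ) ρ p :=
    (hρ.contMDiff).mdifferentiableAt (by simp)
  have : (fun q => γ (ρ q)) = γ ∘ ρ := rfl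
  rw [this, mfderiv_comp p hγd hρd, ContinuousLinearMap.toLinearMap_comp]
  calc Module.finrank ℝ (LinearMap.range ((mfderiv 𝓘(ℝ, ℝ) 𝓘(ℝ, E) γ (ρ p)).toLinearMap ∘ₗ
        (mfderiv 𝓘(ℝ, ℝ × ℝ) 𝓘(ℝ, ℝ) ρ p).toLinearMap))
      ≤ Module.finrank ℝ (LinearMap.range (mfderiv 𝓘(ℝ, ℝ) 𝓘(ℝ, E) γ (ρ p)).toLinearMap) :=
        Submodule.finrank_mono (LinearMap.range_comp_le_range _ _)
    _ ≤ Module.finrank ℝ ℝ := LinearMap.finrank_range_le _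
    _ = 1 := Module.finrank_self ℝ

/-- Transfer lemma: a rank-1 homotopy can be produced from a smooth real-valued
reparametrization `ρ` satisfying the appropriate boundary conditions. -/
lemma rank1Homotopic_of_factor {γ : ℝ → M} (hγ : ContMDiff 𝓘(ℝ, ℝ) 𝓘(ℝ, E) (⊤ : ℕ∞) γ)
    {ρ : ℝ × ℝ → ℝ} (hρ : ContDiff ℝ (⊤ : ℕ∞) ρ) {γ₀ γ₁ : ℝ → M}
    (ε₂ : ℝ) (hε₂ : 0 < ε₂)
    (hs0 : ∀ s t, s ≤ ε₂ → ρ (s, t) = ρ (0, t))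
    (hs1 : ∀ s t, 1 - ε₂ ≤ s → ρ (s, t) = ρ (1, t))
    (ht0 : ∀ s t, t ≤ ε₂ → γ (ρ (s, t)) = γ (ρ (s, 0)))
    (ht1 : ∀ s t, 1 - ε₂ ≤ t → γ (ρ (s, t)) = γ (ρ (s, 1)))
    (he0 : ∀ s s', γ (ρ (s, 0)) = γ (ρ (s', 0)))
    (he1 : ∀ s s', γ (ρ (s, 1)) = γ (ρ (s', 1)))
    (h0 : ∀ t, γ (ρ (0, t)) = γ₀ t) (h1 : ∀ t, γ (ρ (1, t)) = γ₁ t) :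
    Rank1Homotopic E γ₀ γ₁ := by
  refine ⟨fun p => γ (ρ p), ⟨⟨hγ.comp hρ.contMDiff, ⟨ε₂, hε₂, ?_, ?_, ht0, ht1⟩, he0, he1⟩,
    rank_le_one_of_factor E hγ hρ⟩, h0, h1⟩
  · intro s t hst; exact congrArg γ (hs0 s t hst)
  · intro s t hst; exact congrArg γ (hs1 s t hst)

theorem compPath_reverse_rank1Homotopic (γ : ℝ → M) (h : IsOnePath E γ) :
    Rank1Homotopic E (compPath γ (fun t => γ (1 - t))) (fun _ => γ 0) ∧
    Rank1Homotopic E (compPath (fun t => γ (1 - t)) γ) (fun _ => γ 1) := by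
  obtain ⟨hγ, ε, hε, hg0, hg1⟩ := h
  set ε' : ℝ := min ε (1/4) with hε'def
  have hε' : 0 < ε' := lt_min hε (by norm_num)
  have hε'ε : ε' ≤ ε := min_le_left _ _
  have hε'4 : ε' ≤ 1/4 := min_le_right _ _
  set η : ℝ := ε' / 2 with hηdef
  have hη : 0 < η := by positivity
  have hee : ε' = 2 * η := by rw [hηdef]; ring
  have hη8 : η ≤ 1/8 := by rw [hηdef]; linarith
  have γc0 : ∀ x : ℝ, x ≤ ε' → γ x = γ 0 := fun x hx => hg0 x (le_trans hx hε'ε)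
  have γc1 : ∀ x : ℝ, 1 - ε' ≤ x → γ x = γ 1 := fun x hx => hg1 x (by linarith)
  -- the switch function in the `s` variable
  set σ : ℝ → ℝ := fun s => Real.smoothTransition (3 * s - 1) with hσdef
  have hσ0 : ∀ s : ℝ, s ≤ η → σ s = 0 := fun s hs =>
    Real.smoothTransition.zero_of_nonpos (by linarith)
  have hσ1 : ∀ s : ℝ, 1 - η ≤ s → σ s = 1 := fun s hs =>
    Real.smoothTransition.one_of_one_le (by linarith)
  have hσnn : ∀ s, 0 ≤ σ s := fun s => Real.smoothTransition.nonneg _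
  have hσle : ∀ s, σ s ≤ 1 := fun s => Real.smoothTransition.le_one _
  have hσsmooth : ContDiff ℝ (⊤ : ℕ∞) σ :=
    Real.smoothTransition.contDiff.comp (by fun_prop)
  -- the smoothed tent function in the `t` variable
  set χ : ℝ → ℝ := fun t => Real.smoothTransition ((t - (1/2 - η)) / (2 * η)) with hχdef
  set f : ℝ → ℝ := fun t => 2 * t + χ t * (2 - 4 * t) with hfdef
  have hχsmooth : ContDiff ℝ (⊤ : ℕ∞) χ :=
    Real.smoothTransition.contDiff.comp ((by fun_prop : ContDiff ℝ (⊤ : ℕ∞)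
      (fun t : ℝ => t - (1/2 - η))).div_const _)
  have hfsmooth : ContDiff ℝ (⊤ : ℕ∞) f := by
    apply ContDiff.add (by fun_prop)
    exact hχsmooth.mul (by fun_prop)
  have hf_left : ∀ t : ℝ, t ≤ 1/2 - η → f t = 2 * t := by
    intro t ht
    have : χ t = 0 := Real.smoothTransition.zero_of_nonpos
      (div_nonpos_of_nonpos_of_nonneg (by linarith) (by linarith))
    simp [hfdef, this]
  have hf_right : ∀ t : ℝ, 1/2 + η ≤ t → f t = 2 - 2 * t := by
    intro t ht
    have : χ t = 1 := Real.smoothTransition.one_of_one_le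
      (by rw [le_div_iff₀ (by linarith)]; linarith)
    rw [hfdef]; simp only [this]; ring
  have hf_mid : ∀ t : ℝ, 1/2 - η ≤ t → t ≤ 1/2 + η → 1 - ε' ≤ f t := by
    intro t ht1 ht2
    have h1 : 0 ≤ χ t := Real.smoothTransition.nonneg _
    have h2 : χ t ≤ 1 := Real.smoothTransition.le_one _
    rw [hfdef]
    show 1 - ε' ≤ 2 * t + χ t * (2 - 4 * t)
    rcases le_or_gt t (1/2) with hc | hc
    · nlinarith [mul_nonneg h1 (by linarith : (0:ℝ) ≤ 2 - 4 * t)]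
    · nlinarith [mul_nonpos_of_nonneg_of_nonpos (by linarith : (0:ℝ) ≤ 1 - χ t)
        (by linarith : 2 - 4 * t ≤ 0)]
  have hf0 : f 0 = 0 := by
    have : χ 0 = 0 := Real.smoothTransition.zero_of_nonpos
      (div_nonpos_of_nonpos_of_nonneg (by linarith) (by linarith))
    simp [hfdef, this]
  have hf1 : f 1 = 0 := by
    have : χ 1 = 1 := Real.smoothTransition.one_of_one_le
      (by rw [le_div_iff₀ (by linarith)]; linarith)
    rw [hfdef]; simp only [this]; ring
  -- smallness of (1 - σ s) * f t near the t-boundary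
  have key : ∀ s t : ℝ, t ≤ η → (1 - σ s) * f t ≤ ε' := by
    intro s t ht
    have hft : f t = 2 * t := hf_left t (by linarith)
    have h1 : 0 ≤ 1 - σ s := by linarith [hσle s]
    have h2 : 1 - σ s ≤ 1 := by linarith [hσnn s]
    rcases le_or_gt t 0 with hc | hc
    · have : (1 - σ s) * f t ≤ 0 := by
        rw [hft]; exact mul_nonpos_of_nonneg_of_nonpos h1 (by linarith)
      linarith
    · rw [hft]
      calc (1 - σ s) * (2 * t) ≤ 1 * (2 * t) :=
            mul_le_mul_of_nonneg_right h2 (by linarith)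
        _ = 2 * t := one_mul _
        _ ≤ ε' := by linarith
  have key' : ∀ s t : ℝ, 1 - η ≤ t → (1 - σ s) * f t ≤ ε' := by
    intro s t ht
    have hft : f t = 2 - 2 * t := hf_right t (by linarith)
    have h1 : 0 ≤ 1 - σ s := by linarith [hσle s]
    have h2 : 1 - σ s ≤ 1 := by linarith [hσnn s]
    rcases le_or_gt t 1 with hc | hc
    · rw [hft]
      calc (1 - σ s) * (2 - 2 * t) ≤ 1 * (2 - 2 * t) :=
            mul_le_mul_of_nonneg_right h2 (by linarith)
        _ = 2 - 2 * t := one_mul _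
        _ ≤ ε' := by linarith
    · have : (1 - σ s) * f t ≤ 0 := by
        rw [hft]; exact mul_nonpos_of_nonneg_of_nonpos h1 (by linarith)
      linarith
  -- the two reparametrizations
  set ρ₁ : ℝ × ℝ → ℝ := fun p => (1 - σ p.1) * f p.2 with hρ₁def
  set ρ₂ : ℝ × ℝ → ℝ := fun p => 1 - (1 - σ p.1) * f p.2 with hρ₂def
  have hρ₁ : ContDiff ℝ (⊤ : ℕ∞) ρ₁ :=
    (contDiff_const.sub (hσsmooth.comp contDiff_fst)).mul (hfsmooth.comp contDiff_snd)
  have hρ₂ : ContDiff ℝ (⊤ : ℕ∞) ρ₂ := contDiff_const.sub hρ₁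
  refine ⟨rank1Homotopic_of_factor E hγ hρ₁ η hη ?_ ?_ ?_ ?_ ?_ ?_ ?_ ?_,
    rank1Homotopic_of_factor E hγ hρ₂ η hη ?_ ?_ ?_ ?_ ?_ ?_ ?_ ?_⟩
  · intro s t hs
    simp only [hρ₁def, hσ0 s hs, hσ0 0 (by linarith)]
  · intro s t hs
    simp only [hρ₁def, hσ1 s hs, hσ1 1 (by linarith)]
  · intro s t ht
    simp only [hρ₁def]
    rw [hf0, mul_zero, γc0 _ (key s t ht), γc0 0 (by linarith)]
  · intro s t ht
    simp only [hρ₁def]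
    rw [hf1, mul_zero, γc0 _ (key' s t ht), γc0 0 (by linarith)]
  · intro s s'; simp only [hρ₁def, hf0, mul_zero]
  · intro s s'; simp only [hρ₁def, hf1, mul_zero]
  · intro t
    simp only [hρ₁def, hσ0 0 (by linarith), sub_zero, one_mul]
    rw [compPath]
    rcases le_or_gt t (1/2 - η) with hc | hc
    · rw [hf_left t hc, if_pos (by linarith)]
    · rcases le_or_gt (1/2 + η) t with hc' | hc'
      · rw [hf_right t hc', if_neg (by push_neg; linarith)]
        congr 1; ring
      · have hmid : 1 - ε' ≤ f t := hf_mid t (by linarith) (by linarith)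
        rw [γc1 _ hmid]
        split
        · rw [γc1 (2 * t) (by linarith)]
        · rw [γc1 (1 - (2 * t - 1)) (by linarith)]
  · intro t
    simp only [hρ₁def, hσ1 1 (by linarith), sub_self, zero_mul]
  · intro s t hs
    simp only [hρ₂def, hσ0 s hs, hσ0 0 (by linarith)]
  · intro s t hs
    simp only [hρ₂def, hσ1 s hs, hσ1 1 (by linarith)]
  · intro s t ht
    simp only [hρ₂def]
    rw [hf0, mul_zero, sub_zero, γc1 _ (by linarith [key s t ht]), γc1 1 (by linarith)]
  · intro s t ht
    simp only [hρ₂def]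
    rw [hf1, mul_zero, sub_zero, γc1 _ (by linarith [key' s t ht]), γc1 1 (by linarith)]
  · intro s s'; simp only [hρ₂def, hf0, mul_zero]
  · intro s s'; simp only [hρ₂def, hf1, mul_zero]
  · intro t
    simp only [hρ₂def, hσ0 0 (by linarith), sub_zero, one_mul]
    rw [compPath]
    rcases le_or_gt t (1/2 - η) with hc | hc
    · rw [hf_left t hc, if_pos (by linarith)]
    · rcases le_or_gt (1/2 + η) t with hc' | hc'
      · rw [hf_right t hc', if_neg (by push_neg; linarith)]
        congr 1; ring
      · have hmid : 1 - ε' ≤ f t := hf_mid t (by linarith) (by linarith)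
        rw [γc0 _ (by linarith)]
        split
        · rw [γc0 (1 - 2 * t) (by linarith)]
        · rw [γc0 (2 * t - 1) (by linarith)]
  · intro t
    simp only [hρ₂def, hσ1 1 (by linarith), sub_self, zero_mul, sub_zero]
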